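/- Assume the spectral locus is strictly convex. Let f, g : [0,1] → ℝ be μ̃-integrable functions with ∫_{[0,1]} f dμ̃ = ∫_{[0,1]} g dμ̃ = 1 such that f − g changes sign twice on [0,1]. Then c(f) ≠ c(g), i.e. ∫_{[0,1]} f·η dμ̃ ≠ ∫_{[0,1]} g·η dμ̃. -/

import Mathlib

open MeasureTheory Set Real

noncomputable section

abbrev E3 := EuclideanSpace ℝ (Fin 3)

/-- The affine hyperplane `A = {x ∈ ℝ³ : x₁ + x₂ + x₃ = 1}`. -/
def planeA : Set E3 := {x | x 0 + x 1 + x 2 = 1}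

/-- The standard 2-simplex `Δ²`. -/
def simplex2 : Set E3 := {x | (∀ i, 0 ≤ x i) ∧ x 0 + x 1 + x 2 = 1}

/-- Interior relative to the affine hyperplane `A` (for subsets of `A`). -/
def intA (s : Set E3) : Set E3 :=
  {x | x ∈ planeA ∧ ∃ U : Set E3, IsOpen U ∧ x ∈ U ∧ U ∩ planeA ⊆ s}

/-- Closure relative to the affine hyperplane `A` (for subsets of `A`). -/
def closA (s : Set E3) : Set E3 :=
  {x | x ∈ planeA ∧ ∀ U : Set E3, IsOpen U → x ∈ U → (U ∩ planeA ∩ s).Nonempty}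

/-- Boundary relative to the affine hyperplane `A` (for subsets of `A`). -/
def frontA (s : Set E3) : Set E3 := closA s \ intA s

/-- The color triangle `T = conv(η([0,1]))`. -/
def colorTri (η : ℝ → E3) : Set E3 := convexHull ℝ (η '' Icc 0 1)

/-- The cyclic interval `[a,b]_𝕋 ⊆ [0,1]`. -/
def cycIcc (a b : ℝ) : Set ℝ := if a ≤ b then Icc a b else Icc a 1 ∪ Icc 0 b

/-- The color of a spectral density `f` w.r.t. the reference measure `mu`:
`c(f) = ∫_{[0,1]} f(λ) • η(λ) dμ̃(λ)`. -/
def colorOf (mu : Measure ℝ) (η : ℝ → E3) (f : ℝ → ℝ) : E3 :=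
  ∫ lam in Icc (0:ℝ) 1, f lam • η lam ∂mu

/-- The spectral locus is convex: `η([0,1]) ⊆ ∂T` and from each interior point of `T` the locus
is seen under a continuous monotone angle `θ_c` with total variation at most `2π`, where the
angle is measured in the fixed orthonormal frame `(u, v)` of the direction plane of `A`. -/
def IsConvexLocus (η : ℝ → E3) (u v : E3) : Prop :=
  η '' Icc 0 1 ⊆ frontA (colorTri η) ∧
  ∀ c ∈ intA (colorTri η), ∃ θ : ℝ → ℝ,
    ContinuousOn θ (Icc 0 1) ∧
    (MonotoneOn θ (Icc 0 1) ∨ AntitoneOn θ (Icc 0 1)) ∧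
    |θ 1 - θ 0| ≤ 2 * π ∧
    ∀ lam ∈ Icc (0:ℝ) 1,
      η lam - c = ‖η lam - c‖ • (Real.cos (θ lam) • u + Real.sin (θ lam) • v)

/-- The spectral locus is strictly convex: convex, and moreover `η(λ)` does not lie on the chord
`[η(a), η(b)]` for pairwise distinct `a, b, λ ∈ [0,1]`. -/
def IsStrictConvexLocus (η : ℝ → E3) (u v : E3) : Prop :=
  IsConvexLocus η u v ∧
  ∀ a ∈ Icc (0:ℝ) 1, ∀ b ∈ Icc (0:ℝ) 1, ∀ lam ∈ Icc (0:ℝ) 1,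
    a ≠ b → b ≠ lam → a ≠ lam → η lam ∉ segment ℝ (η a) (η b)

/-- `w` changes sign twice on `[0,1]` (w.r.t. the measure `mu`). -/
def changesSignTwice (mu : Measure ℝ) (w : ℝ → ℝ) : Prop :=
  0 < mu {lam | lam ∈ Icc (0:ℝ) 1 ∧ 0 < w lam} ∧
  0 < mu {lam | lam ∈ Icc (0:ℝ) 1 ∧ w lam < 0} ∧
  ∃ a ∈ Icc (0:ℝ) 1, ∃ b ∈ Icc (0:ℝ) 1,
    (interior (cycIcc a b)).Nonempty ∧
    (interior (Icc (0:ℝ) 1 \ cycIcc a b)).Nonempty ∧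
    (∀ lam ∈ cycIcc a b, 0 ≤ w lam) ∧
    (∀ lam ∈ Icc (0:ℝ) 1 \ cycIcc a b, w lam ≤ 0)

lemma seg_cases' {V : Type*} [AddCommGroup V] [Module ℝ V] (A B C : V) (k : ℝ)
    (h : B = A + k • (C - A)) :
    B ∈ segment ℝ A C ∨ A ∈ segment ℝ B C ∨ C ∈ segment ℝ A B := by
  rcases le_or_gt 0 k with h0 | h0
  · rcases le_or_gt k 1 with h1 | h1
    · left
      exact ⟨1 - k, k, by linarith, h0, by ring, by rw [h]; module⟩
    · right; right
      have hk : k ≠ 0 := by positivity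
      refine ⟨1 - 1/k, 1/k, by
        have : 1/k < 1 := by
          rw [div_lt_one (by linarith)]; linarith
        linarith, by positivity, by ring, ?_⟩
      rw [h]
      match_scalars <;> (field_simp; try ring)
  · right; left
    have hden : k - 1 < 0 := by linarith
    have hden' : k - 1 ≠ 0 := by linarith
    have hτ0 : 0 < k / (k - 1) := div_pos_of_neg_of_neg h0 hden
    have hτ1 : k / (k - 1) < 1 := by
      rw [div_lt_one_of_neg hden]; linarith
    refine ⟨1 - k/(k-1), k/(k-1), by linarith, le_of_lt hτ0, by ring, ?_⟩
    rw [h]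
    match_scalars <;> (field_simp; try ring)

lemma K1_abstract {W : Type*} [AddCommGroup W] [Module ℝ W] (p : ℝ → W) (u v : W)
    (X Y : ℝ → ℝ)
    (hd : ∀ lam ∈ Icc (0:ℝ) 1, ∀ t ∈ Icc (0:ℝ) 1,
      p lam - p t = (X lam - X t) • u + (Y lam - Y t) • v)
    (hchord : ∀ a ∈ Icc (0:ℝ) 1, ∀ b ∈ Icc (0:ℝ) 1, ∀ lam ∈ Icc (0:ℝ) 1,
      a ≠ b → b ≠ lam → a ≠ lam → p lam ∉ segment ℝ (p a) (p b)) :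
    ∀ r s t : ℝ, 0 ≤ r → r < s → s < t → t ≤ 1 →
      (X s - X r) * (Y t - Y r) - (Y s - Y r) * (X t - X r) ≠ 0 := by
  intro r s t hr hrs hst ht h0
  have hrI : r ∈ Icc (0:ℝ) 1 := ⟨hr, by linarith⟩
  have hsI : s ∈ Icc (0:ℝ) 1 := ⟨by linarith, by linarith⟩
  have htI : t ∈ Icc (0:ℝ) 1 := ⟨by linarith, by linarith⟩
  have hrs' : r ≠ s := ne_of_lt hrs
  have hst' : s ≠ t := ne_of_lt hst
  have hrt' : r ≠ t := ne_of_lt (lt_trans hrs hst)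
  have hx : p s - p r = (X s - X r) • u + (Y s - Y r) • v := hd s hsI r hrI
  have hy : p t - p r = (X t - X r) • u + (Y t - Y r) • v := hd t htI r hrI
  by_cases hz : X t - X r = 0 ∧ Y t - Y r = 0
  · have h1 : p t - p r = 0 := by rw [hy, hz.1, hz.2]; simp
    have hCA : p t = p r := by rwa [sub_eq_zero] at h1
    exact hchord r hrI s hsI t htI hrs' hst' hrt'
      (hCA ▸ left_mem_segment ℝ (p r) (p s))
  · have hk : ∃ k : ℝ, X s - X r = k * (X t - X r) ∧ Y s - Y r = k * (Y t - Y r) := by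
      by_cases hs0 : X t - X r = 0
      · have ht0 : Y t - Y r ≠ 0 := fun h => hz ⟨hs0, h⟩
        refine ⟨(Y s - Y r) / (Y t - Y r), ?_, by field_simp⟩
        have hp0 : (X s - X r) * (Y t - Y r) = 0 := by rw [hs0] at h0; linarith
        have : X s - X r = 0 := by
          rcases mul_eq_zero.mp hp0 with h | h
          · exact h
          · exact absurd h ht0
        rw [this, hs0, mul_zero]
      · refine ⟨(X s - X r) / (X t - X r), by field_simp, ?_⟩
        field_simp
        linarith
    obtain ⟨k, hk1, hk2⟩ := hk
    have hBA : p s = p r + k • (p t - p r) := by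
      have h2 : p s - p r = k • (p t - p r) := by
        rw [hx, hy, hk1, hk2]; module
      rw [← h2]; abel
    rcases seg_cases' (p r) (p s) (p t) k hBA with h | h | h
    · exact hchord r hrI t htI s hsI hrt' hst'.symm hrs' h
    · exact hchord s hsI t htI r hrI hst' hrt'.symm hrs'.symm h
    · exact hchord r hrI s hsI t htI hrs' hst' hrt' h

lemma sign_lemma (X Y : ℝ → ℝ) (hXc : ContinuousOn X (Icc 0 1)) (hYc : ContinuousOn Y (Icc 0 1))
    (hK1 : ∀ r s t : ℝ, 0 ≤ r → r < s → s < t → t ≤ 1 →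
      (X s - X r) * (Y t - Y r) - (Y s - Y r) * (X t - X r) ≠ 0)
    (a b : ℝ) (haI : a ∈ Icc (0:ℝ) 1) (hbI : b ∈ Icc (0:ℝ) 1) (hab : a ≠ b) :
    ∃ σ : ℝ,
      (∀ lam ∈ cycIcc a b,
        0 ≤ σ * ((X lam - X a) * (Y b - Y a) - (Y lam - Y a) * (X b - X a))) ∧
      (∀ lam ∈ Icc (0:ℝ) 1 \ cycIcc a b,
        σ * ((X lam - X a) * (Y b - Y a) - (Y lam - Y a) * (X b - X a)) < 0) := by
  set O : Set (ℝ × ℝ × ℝ) := {q | 0 ≤ q.1 ∧ q.1 < q.2.1 ∧ q.2.1 < q.2.2 ∧ q.2.2 ≤ 1}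
    with hOdef
  have hOconv : Convex ℝ O := by
    intro q hq q' hq' α β hα hβ hαβ
    obtain ⟨h1, h2, h3, h4⟩ := hq
    obtain ⟨h1', h2', h3', h4'⟩ := hq'
    have key : ∀ x1 x2 y1 y2 : ℝ, x1 < x2 → y1 < y2 → α*x1+β*y1 < α*x2+β*y2 := by
      intro x1 x2 y1 y2 hx hy
      rcases eq_or_lt_of_le hα with h | h
      · have hβ1 : β = 1 := by linarith
        rw [← h, hβ1]; simpa using hy
      · have k1 : α*x1 < α*x2 := by nlinarith
        have k2 : β*y1 ≤ β*y2 := by nlinarith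
        linarith
    refine ⟨?_, ?_, ?_, ?_⟩ <;>
      simp only [Prod.fst_add, Prod.snd_add, Prod.smul_fst, Prod.smul_snd, smul_eq_mul]
    · exact add_nonneg (mul_nonneg hα h1) (mul_nonneg hβ h1')
    · exact key _ _ _ _ h2 h2'
    · exact key _ _ _ _ h3 h3'
    · nlinarith
  set gO : ℝ × ℝ × ℝ → ℝ := fun q =>
    (X q.2.1 - X q.1) * (Y q.2.2 - Y q.1) - (Y q.2.1 - Y q.1) * (X q.2.2 - X q.1) with hgOdef
  have hmaps1 : MapsTo (fun q : ℝ×ℝ×ℝ => q.1) O (Icc 0 1) := fun q hq =>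
    ⟨hq.1, by linarith [hq.2.1, hq.2.2.1, hq.2.2.2]⟩
  have hmaps2 : MapsTo (fun q : ℝ×ℝ×ℝ => q.2.1) O (Icc 0 1) := fun q hq =>
    ⟨le_trans hq.1 hq.2.1.le, by linarith [hq.2.2.1, hq.2.2.2]⟩
  have hmaps3 : MapsTo (fun q : ℝ×ℝ×ℝ => q.2.2) O (Icc 0 1) := fun q hq =>
    ⟨by linarith [hq.1, hq.2.1, hq.2.2.1], hq.2.2.2⟩
  have hcX1 : ContinuousOn (fun q : ℝ×ℝ×ℝ => X q.1) O :=
    hXc.comp continuous_fst.continuousOn hmaps1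
  have hcX2 : ContinuousOn (fun q : ℝ×ℝ×ℝ => X q.2.1) O :=
    hXc.comp continuous_snd.fst.continuousOn hmaps2
  have hcX3 : ContinuousOn (fun q : ℝ×ℝ×ℝ => X q.2.2) O :=
    hXc.comp continuous_snd.snd.continuousOn hmaps3
  have hcY1 : ContinuousOn (fun q : ℝ×ℝ×ℝ => Y q.1) O :=
    hYc.comp continuous_fst.continuousOn hmaps1
  have hcY2 : ContinuousOn (fun q : ℝ×ℝ×ℝ => Y q.2.1) O :=
    hYc.comp continuous_snd.fst.continuousOn hmaps2
  have hcY3 : ContinuousOn (fun q : ℝ×ℝ×ℝ => Y q.2.2) O :=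
    hYc.comp continuous_snd.snd.continuousOn hmaps3
  have hgOc : ContinuousOn gO O := by
    rw [hgOdef]
    exact ((hcX2.sub hcX1).mul (hcY3.sub hcY1)).sub ((hcY2.sub hcY1).mul (hcX3.sub hcX1))
  have hgO0 : ∀ q ∈ O, gO q ≠ 0 := fun q hq =>
    hK1 q.1 q.2.1 q.2.2 hq.1 hq.2.1 hq.2.2.1 hq.2.2.2
  have hK2 : ∀ q ∈ O, ∀ q' ∈ O, 0 < gO q * gO q' := by
    intro q hq q' hq'
    rcases lt_trichotomy (gO q) 0 with h1 | h1 | h1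
    · rcases lt_trichotomy (gO q') 0 with h2 | h2 | h2
      · exact mul_pos_of_neg_of_neg h1 h2
      · exact absurd h2 (hgO0 q' hq')
      · obtain ⟨x, hx, hx0⟩ := hOconv.isPreconnected.intermediate_value₂ hq hq'
          hgOc continuousOn_const h1.le h2.le
        exact absurd hx0 (hgO0 x hx)
    · exact absurd h1 (hgO0 q hq)
    · rcases lt_trichotomy (gO q') 0 with h2 | h2 | h2
      · obtain ⟨x, hx, hx0⟩ := hOconv.isPreconnected.intermediate_value₂ hq' hq
          hgOc continuousOn_const h2.le h1.le
        exact absurd hx0 (hgO0 x hx)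
      · exact absurd h2 (hgO0 q' hq')
      · exact mul_pos h1 h2
  have hO₀ : ((0:ℝ), (1/2:ℝ), (1:ℝ)) ∈ O := ⟨le_refl 0, by norm_num, by norm_num, le_refl 1⟩
  set σ : ℝ := if 0 < gO (0, 1/2, 1) then 1 else -1 with hσdef
  have hσ : ∀ r s t : ℝ, 0 ≤ r → r < s → s < t → t ≤ 1 →
      0 < σ * ((X s - X r) * (Y t - Y r) - (Y s - Y r) * (X t - X r)) := by
    intro r s t hr hrs hst ht
    have hmem : ((r, s, t) : ℝ×ℝ×ℝ) ∈ O := ⟨hr, hrs, hst, ht⟩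
    have hprod := hK2 _ hmem _ hO₀
    have hg : gO (r, s, t) = (X s - X r) * (Y t - Y r) - (Y s - Y r) * (X t - X r) := rfl
    rw [hg] at hprod
    rw [hσdef]
    split_ifs with hbpos
    · rw [one_mul]; nlinarith
    · have h0 : gO (0, 1/2, 1) ≠ 0 := hgO0 _ hO₀
      have hneg : gO (0, 1/2, 1) < 0 := lt_of_le_of_ne (not_lt.mp hbpos) h0
      nlinarith
  refine ⟨σ, ?_, ?_⟩
  · intro lam hlam
    simp only [cycIcc] at hlam
    split_ifs at hlam with hab'
    · have hab2 : a < b := lt_of_le_of_ne hab' hab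
      obtain ⟨h1, h2⟩ := hlam
      rcases eq_or_lt_of_le h1 with h | h
      · rw [← h]
        have hz : (X a - X a) * (Y b - Y a) - (Y a - Y a) * (X b - X a) = 0 := by ring
        rw [hz, mul_zero]
      · rcases eq_or_lt_of_le h2 with h' | h'
        · rw [h']
          have hz : (X b - X a) * (Y b - Y a) - (Y b - Y a) * (X b - X a) = 0 := by ring
          rw [hz, mul_zero]
        · exact (hσ a lam b haI.1 h h' hbI.2).le
    · have hba : b < a := lt_of_not_ge hab'
      rcases hlam with ⟨h1, h2⟩ | ⟨h1, h2⟩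
      · rcases eq_or_lt_of_le h1 with h | h
        · rw [← h]
          have hz : (X a - X a) * (Y b - Y a) - (Y a - Y a) * (X b - X a) = 0 := by ring
          rw [hz, mul_zero]
        · have h3 := hσ b a lam hbI.1 hba h h2
          have hid : (X a - X b) * (Y lam - Y b) - (Y a - Y b) * (X lam - X b)
              = (X lam - X a) * (Y b - Y a) - (Y lam - Y a) * (X b - X a) := by ring
          rw [hid] at h3; exact h3.le
      · rcases eq_or_lt_of_le h2 with h | h
        · rw [h]
          have hz : (X b - X a) * (Y b - Y a) - (Y b - Y a) * (X b - X a) = 0 := by ring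
          rw [hz, mul_zero]
        · have h3 := hσ lam b a h1 h hba haI.2
          have hid : (X b - X lam) * (Y a - Y lam) - (Y b - Y lam) * (X a - X lam)
              = (X lam - X a) * (Y b - Y a) - (Y lam - Y a) * (X b - X a) := by ring
          rw [hid] at h3; exact h3.le
  · intro lam hlam
    obtain ⟨hlamI, hlamN⟩ := hlam
    simp only [cycIcc] at hlamN
    split_ifs at hlamN with hab'
    · have hab2 : a < b := lt_of_le_of_ne hab' hab
      rw [mem_Icc, not_and_or, not_le, not_le] at hlamN
      rcases hlamN with h | h
      · have h3 := hσ lam a b hlamI.1 h hab2 hbI.2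
        have hid : (X a - X lam) * (Y b - Y lam) - (Y a - Y lam) * (X b - X lam)
            = -((X lam - X a) * (Y b - Y a) - (Y lam - Y a) * (X b - X a)) := by ring
        rw [hid] at h3; linarith
      · have h3 := hσ a b lam haI.1 hab2 h hlamI.2
        have hid : (X b - X a) * (Y lam - Y a) - (Y b - Y a) * (X lam - X a)
            = -((X lam - X a) * (Y b - Y a) - (Y lam - Y a) * (X b - X a)) := by ring
        rw [hid] at h3; linarith
    · have hba : b < a := lt_of_not_ge hab'
      have h1 : b < lam := by
        by_contra h; push_neg at h
        exact hlamN (Or.inr ⟨hlamI.1, h⟩)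
      have h2 : lam < a := by
        by_contra h; push_neg at h
        exact hlamN (Or.inl ⟨h, hlamI.2⟩)
      have h3 := hσ b lam a hbI.1 h1 h2 haI.2
      have hid : (X lam - X b) * (Y a - Y b) - (Y lam - Y b) * (X a - X b)
          = -((X lam - X a) * (Y b - Y a) - (Y lam - Y a) * (X b - X a)) := by ring
      rw [hid] at h3; linarith


/-- if the spectral locus is strictly convex and `f`, `g` are normalized densities
whose difference changes sign twice on `[0,1]`, then their colors differ. -/
theorem colors_differ_of_changes_sign_twice
    (η : ℝ → E3) (hηcont : ContinuousOn η (Icc 0 1))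
    (hηΔ : ∀ lam ∈ Icc (0:ℝ) 1, η lam ∈ simplex2)
    (u v : E3) (hu : ‖u‖ = 1) (hv : ‖v‖ = 1) (huv : (inner ℝ u v : ℝ) = 0)
    (hu0 : u 0 + u 1 + u 2 = 0) (hv0 : v 0 + v 1 + v 2 = 0)
    (mu : Measure ℝ) (hprob : IsProbabilityMeasure mu)
    (hconc : mu (Icc (0:ℝ) 1)ᶜ = 0)
    (hsupp : ∀ a b : ℝ, 0 ≤ a → a < b → b ≤ 1 → 0 < mu (Icc a b))
    (hTint : (intA (colorTri η)).Nonempty)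
    (hconv : IsStrictConvexLocus η u v)
    (f g : ℝ → ℝ)
    (hf : IntegrableOn f (Icc 0 1) mu) (hg : IntegrableOn g (Icc 0 1) mu)
    (hf1 : (∫ lam in Icc (0:ℝ) 1, f lam ∂mu) = 1)
    (hg1 : (∫ lam in Icc (0:ℝ) 1, g lam ∂mu) = 1)
    (hsign : changesSignTwice mu (f - g)) :
    colorOf mu η f ≠ colorOf mu η g := by
  intro hEq
  classical
  obtain ⟨c, hc⟩ := hTint
  obtain ⟨θ, hθc, -, -, hrep⟩ := hconv.1.2 c hc
  set Xf : ℝ → ℝ := fun lam => ‖η lam - c‖ * Real.cos (θ lam) with hXf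
  set Yf : ℝ → ℝ := fun lam => ‖η lam - c‖ * Real.sin (θ lam) with hYf
  have hcoord : ∀ lam ∈ Icc (0:ℝ) 1, η lam - c = Xf lam • u + Yf lam • v := by
    intro lam hlam
    rw [hrep lam hlam, smul_add, smul_smul, smul_smul, hXf, hYf]
  have hdiff : ∀ lam ∈ Icc (0:ℝ) 1, ∀ t ∈ Icc (0:ℝ) 1,
      η lam - η t = (Xf lam - Xf t) • u + (Yf lam - Yf t) • v := by
    intro lam hlam t ht
    have h1 := hcoord lam hlam
    have h2 := hcoord t ht
    have h3 : η lam - η t = (η lam - c) - (η t - c) := by abel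
    rw [h3, h1, h2]; module
  have hXc : ContinuousOn Xf (Icc 0 1) := by
    rw [hXf]
    exact ((hηcont.sub continuousOn_const).norm).mul
      (Real.continuous_cos.comp_continuousOn hθc)
  have hYc : ContinuousOn Yf (Icc 0 1) := by
    rw [hYf]
    exact ((hηcont.sub continuousOn_const).norm).mul
      (Real.continuous_sin.comp_continuousOn hθc)
  have hK1 := K1_abstract η u v Xf Yf hdiff hconv.2
  obtain ⟨hpos_meas, hneg_meas, a, haI, b, hbI, hIint, hCint, hwpos, hwneg⟩ := hsign
  have hab : a ≠ b := by
    rintro rfl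
    rw [cycIcc, if_pos le_rfl, Icc_self] at hIint
    simp [interior_singleton] at hIint
  obtain ⟨σ, hDI, hDC⟩ := sign_lemma Xf Yf hXc hYc hK1 a b haI hbI hab
  set D : ℝ → ℝ := fun lam =>
    (Xf lam - Xf a) * (Yf b - Yf a) - (Yf lam - Yf a) * (Xf b - Xf a) with hDdef
  -- inner product representation of D
  have huu : (inner ℝ u u : ℝ) = 1 := by
    rw [real_inner_self_eq_norm_mul_norm, hu]; norm_num
  have hvv : (inner ℝ v v : ℝ) = 1 := by
    rw [real_inner_self_eq_norm_mul_norm, hv]; norm_num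
  have hvu : (inner ℝ v u : ℝ) = 0 := by rw [real_inner_comm]; exact huv
  set U : E3 := (Yf b - Yf a) • u - (Xf b - Xf a) • v with hUdef
  have hDinner : ∀ lam ∈ Icc (0:ℝ) 1,
      D lam = (inner ℝ U (η lam) : ℝ) - (inner ℝ U (η a) : ℝ) := by
    intro lam hlam
    have h1 : (inner ℝ U (η lam) : ℝ) - (inner ℝ U (η a) : ℝ) = (inner ℝ U (η lam - η a) : ℝ) :=
      (inner_sub_right _ _ _).symm
    rw [h1, hdiff lam hlam a haI, hUdef, hDdef]
    simp only [inner_sub_left, inner_add_right, real_inner_smul_left, real_inner_smul_right,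
      huu, hvv, huv, hvu]
    ring
  -- integrability facts
  have hηm : AEStronglyMeasurable η (mu.restrict (Icc 0 1)) :=
    hηcont.aestronglyMeasurable measurableSet_Icc
  obtain ⟨Cη, hCη⟩ := isCompact_Icc.exists_bound_of_continuousOn hηcont
  have hsmul_int : ∀ φ : ℝ → ℝ, IntegrableOn φ (Icc 0 1) mu →
      IntegrableOn (fun lam => φ lam • η lam) (Icc 0 1) mu := by
    intro φ hφ
    refine Integrable.mono' (g := fun lam => Cη * |φ lam|) ((hφ.abs).const_mul Cη)
      (hφ.aestronglyMeasurable.smul hηm) ?_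
    filter_upwards [ae_restrict_mem measurableSet_Icc] with lam hlam
    rw [norm_smul]
    calc ‖φ lam‖ * ‖η lam‖ ≤ ‖φ lam‖ * Cη :=
          mul_le_mul_of_nonneg_left (hCη lam hlam) (norm_nonneg _)
      _ = Cη * |φ lam| := by rw [Real.norm_eq_abs]; ring
  have hwη_int : IntegrableOn (fun lam => (f lam - g lam) • η lam) (Icc 0 1) mu :=
    hsmul_int _ (hf.sub hg)
  have hwη0 : (∫ lam in Icc (0:ℝ) 1, (f lam - g lam) • η lam ∂mu) = 0 := by
    simp only [sub_smul]
    rw [integral_sub (hsmul_int f hf) (hsmul_int g hg)]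
    show colorOf mu η f - colorOf mu η g = 0
    rw [hEq, sub_self]
  have hw0 : (∫ lam in Icc (0:ℝ) 1, (f lam - g lam) ∂mu) = 0 := by
    rw [integral_sub hf hg, hf1, hg1, sub_self]
  have hDc : ContinuousOn D (Icc 0 1) := by
    rw [hDdef]
    exact ((hXc.sub continuousOn_const).mul continuousOn_const).sub
      ((hYc.sub continuousOn_const).mul continuousOn_const)
  obtain ⟨CD, hCD⟩ := isCompact_Icc.exists_bound_of_continuousOn hDc
  have hDm : AEStronglyMeasurable D (mu.restrict (Icc 0 1)) :=
    hDc.aestronglyMeasurable measurableSet_Icc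
  have hwD_int : IntegrableOn (fun lam => (f lam - g lam) * D lam) (Icc 0 1) mu := by
    refine Integrable.mono' (g := fun lam => CD * |f lam - g lam|)
      (((hf.sub hg).abs).const_mul CD)
      ((hf.sub hg).aestronglyMeasurable.mul hDm) ?_
    filter_upwards [ae_restrict_mem measurableSet_Icc] with lam hlam
    rw [Real.norm_eq_abs, abs_mul]
    calc |f lam - g lam| * |D lam| ≤ |f lam - g lam| * CD := by
          have := hCD lam hlam
          rw [Real.norm_eq_abs] at this
          exact mul_le_mul_of_nonneg_left this (abs_nonneg _)
      _ = CD * |f lam - g lam| := mul_comm _ _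
  have hwD0 : (∫ lam in Icc (0:ℝ) 1, (f lam - g lam) * D lam ∂mu) = 0 := by
    have hcongr : ∀ᵐ lam ∂(mu.restrict (Icc 0 1)),
        (f lam - g lam) * D lam
          = (inner ℝ U ((f lam - g lam) • η lam) : ℝ)
            - (inner ℝ U (η a) : ℝ) * (f lam - g lam) := by
      filter_upwards [ae_restrict_mem measurableSet_Icc] with lam hlam
      rw [real_inner_smul_right, hDinner lam hlam]
      ring
    rw [integral_congr_ae hcongr,
      integral_sub (hwη_int.const_inner U)
        ((show IntegrableOn (fun lam => f lam - g lam) (Icc 0 1) mu from hf.sub hg).const_mul _),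
      integral_inner hwη_int U, hwη0, inner_zero_right, integral_const_mul, hw0]
    simp
  -- the nonnegative function with zero integral
  have hh_int : Integrable (fun lam => σ * ((f lam - g lam) * D lam))
      (mu.restrict (Icc 0 1)) := hwD_int.const_mul σ
  have hh0 : (∫ lam in Icc (0:ℝ) 1, σ * ((f lam - g lam) * D lam) ∂mu) = 0 := by
    rw [integral_const_mul, hwD0, mul_zero]
  have hh_nonneg : 0 ≤ᵐ[mu.restrict (Icc 0 1)]
      fun lam => σ * ((f lam - g lam) * D lam) := by
    filter_upwards [ae_restrict_mem measurableSet_Icc] with lam hlam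
    simp only [Pi.zero_apply]
    by_cases hmem : lam ∈ cycIcc a b
    · have h1 : 0 ≤ f lam - g lam := hwpos lam hmem
      have h2 := hDI lam hmem
      have h2' : 0 ≤ σ * D lam := h2
      nlinarith
    · have h1 : f lam - g lam ≤ 0 := hwneg lam ⟨hlam, hmem⟩
      have h2 := hDC lam ⟨hlam, hmem⟩
      have h2' : σ * D lam < 0 := h2
      nlinarith
  have hae := (integral_eq_zero_iff_of_nonneg_ae hh_nonneg hh_int).mp hh0
  have hzero : mu ({lam | σ * ((f lam - g lam) * D lam) ≠ 0} ∩ Icc 0 1) = 0 := by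
    rw [← Measure.restrict_apply' measurableSet_Icc]
    rw [Filter.EventuallyEq, ae_iff] at hae
    simpa using hae
  have hsub : {lam | lam ∈ Icc (0:ℝ) 1 ∧ (f - g) lam < 0}
      ⊆ {lam | σ * ((f lam - g lam) * D lam) ≠ 0} ∩ Icc 0 1 := by
    intro lam hlam
    obtain ⟨hlamI, hlamneg⟩ := hlam
    have hwneg' : f lam - g lam < 0 := hlamneg
    have hnotI : lam ∉ cycIcc a b := by
      intro hmem
      have := hwpos lam hmem
      have h0 : (0:ℝ) ≤ f lam - g lam := this
      linarith
    have hD2 : σ * D lam < 0 := hDC lam ⟨hlamI, hnotI⟩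
    refine ⟨?_, hlamI⟩
    have hpos : 0 < σ * ((f lam - g lam) * D lam) := by nlinarith
    exact hpos.ne'
  have hfin : mu {lam | lam ∈ Icc (0:ℝ) 1 ∧ (f - g) lam < 0} = 0 :=
    measure_mono_null hsub hzero
  rw [hfin] at hneg_meas
  exact lt_irrefl 0 hneg_meas
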